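/- On the pre-death set {t < τ}, the filter π_t(λ) coincides with the 𝔽̃-adapted process π̂_t(λ)(ω) = E[λ(t, μ_t(ω), Z_t) e^{−∫₀ᵗ λ(u, μ_u(ω), Z_u)du}] / E[e^{−∫₀ᵗ λ(u, μ_u(ω), Z_u)du}], where the expectation is over Z only (with the μ-trajectory frozen). -/

import Mathlib

open MeasureTheory ProbabilityTheory Real

section Helpers

lemma intg_of_bdd {X : Type*} [MeasurableSpace X] {μ : Measure X} [IsFiniteMeasure μ]
    {f : X → ℝ} {C : ℝ} (hf : AEStronglyMeasurable f μ) (hC : ∀ᵐ x ∂μ, |f x| ≤ C) :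
    Integrable f μ :=
  (integrable_const C).mono' hf (by simpa using hC)

lemma comap_prop_le {α : Type*} [m : MeasurableSpace α] (p : α → Prop)
    (hp : MeasurableSet {x | p x}) : MeasurableSpace.comap p ⊤ ≤ m := by
  rintro A ⟨V, -, rfl⟩
  by_cases hT : True ∈ V <;> by_cases hF : False ∈ V
  · have hall : p ⁻¹' V = Set.univ := by
      ext x; simp only [Set.mem_preimage, Set.mem_univ, iff_true]
      by_cases h : p x
      · rw [eq_true h]; exact hT
      · rw [eq_false h]; exact hF
    rw [hall]; exact MeasurableSet.univ
  · have hall : p ⁻¹' V = {x | p x} := by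
      ext x; simp only [Set.mem_preimage, Set.mem_setOf_eq]
      by_cases h : p x
      · rw [eq_true h]; simp [hT, h]
      · rw [eq_false h]; simp [hF, h]
    rw [hall]; exact hp
  · have hall : p ⁻¹' V = {x | p x}ᶜ := by
      ext x; simp only [Set.mem_preimage, Set.mem_compl_iff, Set.mem_setOf_eq]
      by_cases h : p x
      · rw [eq_true h]; simp [hT, h]
      · rw [eq_false h]; simp [hF, h]
    rw [hall]; exact hp.compl
  · have hall : p ⁻¹' V = ∅ := by
      ext x; simp only [Set.mem_preimage, Set.mem_empty_iff_false, iff_false]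
      by_cases h : p x
      · rw [eq_true h]; exact hT
      · rw [eq_false h]; exact hF
    rw [hall]; exact MeasurableSet.empty

end Helpers

section LemA
lemma lemA {X Y : Type*} [mX : MeasurableSpace X] [MeasurableSpace Y]
    (Px : Measure X) [IsProbabilityMeasure Px] (ν : Measure Y) [IsFiniteMeasure ν]
    (f : X → Y → ℝ) (hf : Measurable (Function.uncurry f))
    (C : ℝ) (hbd : ∀ x y, |f x y| ≤ C)
    (M' : MeasurableSpace X) (hM : M' ≤ mX)
    (hslice : ∀ y, AEStronglyMeasurable[M'] (fun x => f x y) Px) :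
    AEStronglyMeasurable[M'] (fun x => ∫ y, f x y ∂ν) Px := by
  letI mX' : MeasurableSpace X := mX
  haveI : SigmaFinite (Px.trim hM) := inferInstance
  set I : X → ℝ := fun x => ∫ y, f x y ∂ν with hI
  have hImeas : StronglyMeasurable[mX] I := hf.stronglyMeasurable.integral_prod_right
  have hIameas : AEStronglyMeasurable I Px := hImeas.aestronglyMeasurable
  set K : ℝ := |C| * (ν Set.univ).toReal with hK
  have hbd' : ∀ x y, |f x y| ≤ |C| := fun x y => (hbd x y).trans (le_abs_self C)
  have hIbd : ∀ x, |I x| ≤ K := by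
    intro x
    have := norm_integral_le_of_norm_le_const (μ := ν) (f := fun y => f x y) (C := |C|)
      (ae_of_all _ fun y => by rw [Real.norm_eq_abs]; exact hbd' x y)
    simpa [Real.norm_eq_abs, Measure.real] using this
  have hIint : Integrable I Px := intg_of_bdd hIameas (ae_of_all _ hIbd)
  set g : X → ℝ := Px[I | M'] with hg
  have hgmeas : StronglyMeasurable[M'] g := stronglyMeasurable_condExp
  have hgmeas' : StronglyMeasurable[mX] g := hgmeas.mono hM
  have hgint : Integrable g Px := integrable_condExp
  have hK0 : 0 ≤ K := by positivity
  have hgbd : ∀ᵐ x ∂Px, |g x| ≤ K := by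
    have h1 : g ≤ᵐ[Px] Px[(fun _ => K) | M'] :=
      condExp_mono hIint (integrable_const K) (ae_of_all _ fun x => (abs_le.mp (hIbd x)).2)
    have h2 : Px[(fun _ => (-K : ℝ)) | M'] ≤ᵐ[Px] g :=
      condExp_mono (integrable_const _) hIint (ae_of_all _ fun x => (abs_le.mp (hIbd x)).1)
    rw [condExp_const hM] at h1
    rw [condExp_const hM] at h2
    filter_upwards [h1, h2] with x hx1 hx2
    exact abs_le.mpr ⟨hx2, hx1⟩
  have hII : Integrable (fun x => I x * I x) Px :=
    intg_of_bdd ((hImeas.mul hImeas).aestronglyMeasurable)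
      (ae_of_all _ fun x => by rw [abs_mul]; exact mul_le_mul (hIbd x) (hIbd x) (abs_nonneg _) hK0)
  have hIg : Integrable (fun x => I x * g x) Px :=
    intg_of_bdd ((hImeas.mul hgmeas').aestronglyMeasurable)
      (by filter_upwards [hgbd] with x hx
          rw [abs_mul]; exact mul_le_mul (hIbd x) hx (abs_nonneg _) hK0)
  have hgI : Integrable (fun x => g x * I x) Px :=
    hIg.congr (ae_of_all _ fun x => by ring)
  have hgImul : Integrable (g * I) Px := by
    have : (g * I) = fun x => g x * I x := rfl
    rw [this]; exact hgI
  have hgg : Integrable (fun x => g x * g x) Px :=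
    intg_of_bdd ((hgmeas'.mul hgmeas').aestronglyMeasurable)
      (by filter_upwards [hgbd] with x hx
          rw [abs_mul]; exact mul_le_mul hx hx (abs_nonneg _) hK0)
  have claim_g : ∫ x, g x * I x ∂Px = ∫ x, g x * g x ∂Px := by
    have hmul : Px[g * I | M'] =ᵐ[Px] g * Px[I | M'] :=
      condExp_mul_of_stronglyMeasurable_left hgmeas hgImul hIint
    calc ∫ x, g x * I x ∂Px = ∫ x, (g * I) x ∂Px := by simp [Pi.mul_apply]
      _ = ∫ x, (Px[g * I | M']) x ∂Px := (integral_condExp hM).symm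
      _ = ∫ x, (g * Px[I | M']) x ∂Px := integral_congr_ae hmul
      _ = ∫ x, g x * g x ∂Px := by simp only [Pi.mul_apply, hg]
  have claim_f : ∫ x, I x * I x ∂Px = ∫ x, I x * g x ∂Px := by
    have step1 : ∫ x, I x * I x ∂Px = ∫ x, ∫ y, f x y * I x ∂ν ∂Px := by
      congr 1; ext x
      rw [integral_mul_const]
    have hint1 : Integrable (Function.uncurry fun x y => f x y * I x) (Px.prod ν) := by
      apply intg_of_bdd
      · exact (hf.mul (hImeas.measurable.comp measurable_fst)).aestronglyMeasurable
      · refine ae_of_all _ fun p => ?_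
        have : Function.uncurry (fun x y => f x y * I x) p = f p.1 p.2 * I p.1 := rfl
        rw [this, abs_mul]
        exact mul_le_mul (hbd' _ _) (hIbd _) (abs_nonneg _) (abs_nonneg _)
    have step2 : ∫ x, ∫ y, f x y * I x ∂ν ∂Px = ∫ y, ∫ x, f x y * I x ∂Px ∂ν :=
      integral_integral_swap hint1
    have step3 : ∀ y, ∫ x, f x y * I x ∂Px = ∫ x, f x y * g x ∂Px := by
      intro y
      have hfyI : Integrable ((fun x => f x y) * I) Px := by
        apply intg_of_bdd
        · exact ((hf.comp (measurable_id.prodMk measurable_const)).mul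
            hImeas.measurable).aestronglyMeasurable
        · refine ae_of_all _ fun x => ?_
          rw [Pi.mul_apply, abs_mul]
          exact mul_le_mul (hbd' _ _) (hIbd _) (abs_nonneg _) (abs_nonneg _)
      have hmul : Px[(fun x => f x y) * I | M'] =ᵐ[Px] (fun x => f x y) * Px[I | M'] :=
        condExp_mul_of_aestronglyMeasurable_left (hslice y) hfyI hIint
      calc ∫ x, f x y * I x ∂Px = ∫ x, ((fun x => f x y) * I) x ∂Px := by simp [Pi.mul_apply]
        _ = ∫ x, (Px[(fun x => f x y) * I | M']) x ∂Px := (integral_condExp hM).symm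
        _ = ∫ x, ((fun x => f x y) * Px[I | M']) x ∂Px := integral_congr_ae hmul
        _ = ∫ x, f x y * g x ∂Px := by simp only [Pi.mul_apply, hg]
    have hprodbd : ∀ᵐ p ∂(Px.prod ν), |g p.1| ≤ K := by
      rw [ae_iff] at hgbd ⊢
      obtain ⟨N, hNsub, hNmeas, hN0⟩ := exists_measurable_superset_of_null hgbd
      have hzero : (Px.prod ν) (N ×ˢ Set.univ) = 0 := by
        rw [Measure.prod_prod, hN0, zero_mul]
      exact measure_mono_null
        (fun p hp => Set.mem_prod.mpr ⟨hNsub hp, Set.mem_univ p.2⟩) hzero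
    have hint2 : Integrable (Function.uncurry fun x y => f x y * g x) (Px.prod ν) := by
      apply intg_of_bdd
      · exact (hf.mul (hgmeas'.measurable.comp measurable_fst)).aestronglyMeasurable
      · filter_upwards [hprodbd] with p hp
        have : Function.uncurry (fun x y => f x y * g x) p = f p.1 p.2 * g p.1 := rfl
        rw [this, abs_mul]
        exact mul_le_mul (hbd' _ _) hp (abs_nonneg _) (abs_nonneg _)
    have step4 : ∫ y, ∫ x, f x y * g x ∂Px ∂ν = ∫ x, ∫ y, f x y * g x ∂ν ∂Px :=
      (integral_integral_swap hint2).symm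
    have step5 : ∫ x, ∫ y, f x y * g x ∂ν ∂Px = ∫ x, I x * g x ∂Px := by
      congr 1; ext x
      rw [integral_mul_const]
    rw [step1, step2]
    simp_rw [step3]
    rw [step4, step5]
  have hsub : Integrable (fun x => (I x - g x)^2) Px := by
    apply intg_of_bdd (C := (K + K)^2)
    · exact ((hImeas.sub hgmeas').mul (hImeas.sub hgmeas')).aestronglyMeasurable.congr
        (ae_of_all _ fun x => by simp only [Pi.mul_apply, Pi.sub_apply]; ring)
    · filter_upwards [hgbd] with x hx
      have h1 : |I x - g x| ≤ K + K := (abs_sub _ _).trans (add_le_add (hIbd x) hx)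
      calc |(I x - g x)^2| = (I x - g x)^2 := abs_of_nonneg (sq_nonneg _)
        _ = |I x - g x|^2 := (sq_abs _).symm
        _ ≤ (K + K)^2 := pow_le_pow_left₀ (abs_nonneg _) h1 2
  have expand : ∫ x, (I x - g x)^2 ∂Px = 0 := by
    have h1 : ∫ x, (I x - g x)^2 ∂Px
        = ∫ x, I x * I x - I x * g x - g x * I x + g x * g x ∂Px :=
      integral_congr_ae (ae_of_all _ fun x => by ring)
    have h2 : Integrable (fun x => I x * I x - I x * g x) Px := hII.sub hIg
    have h3 : Integrable (fun x => I x * I x - I x * g x - g x * I x) Px := h2.sub hgI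
    rw [h1, integral_add h3 hgg, integral_sub h2 hgI, integral_sub hII hIg, claim_f, claim_g]
    ring
  have hsq : (fun x => (I x - g x)^2) =ᵐ[Px] 0 :=
    (integral_eq_zero_iff_of_nonneg (fun x => sq_nonneg _) hsub).mp expand
  refine ⟨g, hgmeas, ?_⟩
  filter_upwards [hsq] with x hx
  have h0 : (I x - g x)^2 = 0 := hx
  have := pow_eq_zero_iff (n := 2) (by norm_num) |>.mp h0
  have := sub_eq_zero.mp this
  exact this
end LemA

section Core
lemma coxCore {Ω₁ Ω₂ Ω₃ : Type*} [MeasurableSpace Ω₁] [MeasurableSpace Ω₂] [MeasurableSpace Ω₃]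
    (P₁ : Measure Ω₁) (P₂ : Measure Ω₂) (P₃ : Measure Ω₃)
    [IsProbabilityMeasure P₁] [IsProbabilityMeasure P₂] [IsProbabilityMeasure P₃]
    (Λ : Ω₁ → Ω₂ → ℝ) (hΛ : Measurable (Function.uncurry Λ)) (hΛ0 : ∀ x y, 0 ≤ Λ x y)
    (Θ : Ω₃ → ℝ) (hΘmeas : Measurable Θ)
    (hΘexp : ∀ x : ℝ, 0 ≤ x → P₃ {ω₃ | x < Θ ω₃} = ENNReal.ofReal (Real.exp (-x)))
    (h : Ω₁ → Ω₂ → ℝ) (hh : Measurable (Function.uncurry h)) (C : ℝ) (hC : ∀ x y, |h x y| ≤ C)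
    (B : Set Ω₁) (hB : MeasurableSet B) :
    ∫ ω in (Prod.fst ⁻¹' B) ∩ {ω : Ω₁ × Ω₂ × Ω₃ | Λ ω.1 ω.2.1 < Θ ω.2.2},
        h ω.1 ω.2.1 ∂(P₁.prod (P₂.prod P₃))
      = ∫ ω₁ in B, ∫ ω₂, h ω₁ ω₂ * Real.exp (-Λ ω₁ ω₂) ∂P₂ ∂P₁ := by
  set S : Set (Ω₁ × Ω₂ × Ω₃) := {ω | Λ ω.1 ω.2.1 < Θ ω.2.2} with hS
  have hΛm : Measurable fun ω : Ω₁ × Ω₂ × Ω₃ => Λ ω.1 ω.2.1 :=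
    hΛ.comp (measurable_fst.prodMk (measurable_fst.comp measurable_snd))
  have hSmeas : MeasurableSet S :=
    measurableSet_lt hΛm (hΘmeas.comp (measurable_snd.comp measurable_snd))
  have hhm : Measurable fun ω : Ω₁ × Ω₂ × Ω₃ => h ω.1 ω.2.1 :=
    hh.comp (measurable_fst.prodMk (measurable_fst.comp measurable_snd))
  have hT : MeasurableSet ((Prod.fst ⁻¹' B) ∩ S) :=
    (hB.preimage measurable_fst).inter hSmeas
  set F : Ω₁ × Ω₂ × Ω₃ → ℝ :=
    ((Prod.fst ⁻¹' B) ∩ S).indicator (fun ω => h ω.1 ω.2.1) with hF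
  have hFmeas : Measurable F := hhm.indicator hT
  have hC0 : ∀ x y, |h x y| ≤ |C| := fun x y => (hC x y).trans (le_abs_self C)
  have hFbd : ∀ ω, |F ω| ≤ |C| := by
    intro ω
    by_cases hω : ω ∈ (Prod.fst ⁻¹' B) ∩ S
    · rw [hF, Set.indicator_of_mem hω]; exact hC0 _ _
    · rw [hF, Set.indicator_of_notMem hω]; simp
  have hFint : Integrable F (P₁.prod (P₂.prod P₃)) :=
    intg_of_bdd hFmeas.aestronglyMeasurable (ae_of_all _ hFbd)
  have e1 : ∫ ω in (Prod.fst ⁻¹' B) ∩ S, h ω.1 ω.2.1 ∂(P₁.prod (P₂.prod P₃))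
      = ∫ ω, F ω ∂(P₁.prod (P₂.prod P₃)) := (integral_indicator hT).symm
  rw [e1, MeasureTheory.integral_prod F hFint, ← integral_indicator hB]
  refine integral_congr_ae (ae_of_all _ fun ω₁ => ?_)
  show (∫ q : Ω₂ × Ω₃, F (ω₁, q) ∂(P₂.prod P₃))
    = B.indicator (fun ω₁ => ∫ ω₂, h ω₁ ω₂ * Real.exp (-Λ ω₁ ω₂) ∂P₂) ω₁
  have hFint2 : Integrable (fun q : Ω₂ × Ω₃ => F (ω₁, q)) (P₂.prod P₃) :=
    intg_of_bdd ((hFmeas.comp (measurable_const.prodMk measurable_id)).aestronglyMeasurable)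
      (ae_of_all _ fun q => hFbd _)
  rw [MeasureTheory.integral_prod _ hFint2]
  by_cases hω₁ : ω₁ ∈ B
  · have e2 : ∀ ω₂ : Ω₂, ∫ ω₃, F (ω₁, ω₂, ω₃) ∂P₃ = h ω₁ ω₂ * Real.exp (-Λ ω₁ ω₂) := by
      intro ω₂
      have hptw : ∀ ω₃, F (ω₁, ω₂, ω₃)
          = {ω₃ : Ω₃ | Λ ω₁ ω₂ < Θ ω₃}.indicator (fun _ => h ω₁ ω₂) ω₃ := by
        intro ω₃
        have hm3 : (ω₃ ∈ {x : Ω₃ | Λ ω₁ ω₂ < Θ x}) ↔ Λ ω₁ ω₂ < Θ ω₃ := Iff.rfl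
        by_cases hω₃ : Λ ω₁ ω₂ < Θ ω₃
        · rw [hF, Set.indicator_of_mem
              (Set.mem_inter (show (ω₁, ω₂, ω₃) ∈ Prod.fst ⁻¹' B from hω₁)
                (show (ω₁, ω₂, ω₃) ∈ S from hω₃)),
            Set.indicator_of_mem (hm3.mpr hω₃)]
        · rw [hF, Set.indicator_of_notMem (fun hmem => hω₃ hmem.2),
            Set.indicator_of_notMem (fun hmem => hω₃ (hm3.mp hmem))]
      rw [integral_congr_ae (ae_of_all _ hptw)]
      rw [integral_indicator_const (μ := P₃) (h ω₁ ω₂)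
        (measurableSet_lt measurable_const hΘmeas)]
      rw [measureReal_def, hΘexp _ (hΛ0 ω₁ ω₂), ENNReal.toReal_ofReal (Real.exp_pos _).le]
      rw [smul_eq_mul, mul_comm]
    rw [Set.indicator_of_mem hω₁]
    exact integral_congr_ae (ae_of_all _ e2)
  · have e2 : ∀ ω₂ : Ω₂, ∫ ω₃, F (ω₁, ω₂, ω₃) ∂P₃ = 0 := by
      intro ω₂
      have hptw : ∀ ω₃, F (ω₁, ω₂, ω₃) = 0 := by
        intro ω₃
        rw [hF, Set.indicator_of_notMem (fun hmem => hω₁ hmem.1)]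
      rw [integral_congr_ae (ae_of_all _ hptw)]
      simp
    rw [Set.indicator_of_notMem hω₁, integral_congr_ae (ae_of_all _ e2)]
    simp
end Core

/-- In the Cox model where `Ω = Ω₁ × Ω₂ × Ω₃`, `ω₁` carries the observable
(Brownian) information generating the filtration `F̃`, `ω₂` carries the unobservable factor `Z`,
`ω₃` carries the unit-exponential threshold `Θ`, and
`τ = inf{u ≥ 0 : ∫₀ᵘ λ(s, μ_s, Z_s)ds ≥ Θ}` (here `lam s ω₁ ω₂ = λ(s, μ_s(ω₁), Z_s(ω₂))`
with `0 < a ≤ lam ≤ b`), the filter `π_t(λ) = E[λ(t,μ_t,Z_t) | 𝓖̃_t]` coincides on the survival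
set `{t < τ}` with the `F̃`-adapted process
`π̂_t(λ)(ω) = E_Z[λ(t,μ_t(ω),Z_t) e^{−∫₀ᵗ λ du}] / E_Z[e^{−∫₀ᵗ λ du}]`
(expectation over the `Z`-coordinate only, the `μ`-trajectory being frozen). -/
theorem stmt12 {Ω₁ Ω₂ Ω₃ : Type*}
    [m₁ : MeasurableSpace Ω₁] [MeasurableSpace Ω₂] [MeasurableSpace Ω₃]
    (P₁ : Measure Ω₁) (P₂ : Measure Ω₂) (P₃ : Measure Ω₃)
    [IsProbabilityMeasure P₁] [IsProbabilityMeasure P₂] [IsProbabilityMeasure P₃]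
    (T t : ℝ) (ht : 0 ≤ t) (htT : t ≤ T)
    (a b : ℝ) (ha : 0 < a)
    (lam : ℝ → Ω₁ → Ω₂ → ℝ)
    (hlammeas : Measurable fun p : ℝ × Ω₁ × Ω₂ => lam p.1 p.2.1 p.2.2)
    (hlambd : ∀ s ω₁ ω₂, a ≤ lam s ω₁ ω₂ ∧ lam s ω₁ ω₂ ≤ b)
    (Ftil : ℝ → MeasurableSpace Ω₁) (hFle : ∀ s, Ftil s ≤ m₁)
    (hadapt : ∀ s : ℝ, s ≤ t → ∀ ω₂, Measurable[Ftil t] fun ω₁ => lam s ω₁ ω₂)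
    (Θ : Ω₃ → ℝ) (hΘmeas : Measurable Θ)
    (hΘexp : ∀ x : ℝ, 0 ≤ x → P₃ {ω₃ | x < Θ ω₃} = ENNReal.ofReal (Real.exp (-x)))
    (τ : Ω₁ × Ω₂ × Ω₃ → ℝ)
    (hτ : ∀ ω, τ ω = sInf {u : ℝ | 0 ≤ u ∧ Θ ω.2.2 ≤ ∫ s in (0:ℝ)..u, lam s ω.1 ω.2.1})
    (hτmeas : ∀ s : ℝ, MeasurableSet {ω : Ω₁ × Ω₂ × Ω₃ | τ ω ≤ s}) :
    -- the observation σ-algebra `𝓖̃_t = F̃_t ∨ σ(1_{τ ≤ s}, s ≤ t)`: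
    let P : Measure (Ω₁ × Ω₂ × Ω₃) := P₁.prod (P₂.prod P₃)
    let 𝓖t : MeasurableSpace (Ω₁ × Ω₂ × Ω₃) :=
      MeasurableSpace.comap (fun ω => ω.1) (Ftil t)
        ⊔ ⨆ s ∈ Set.Iic t, MeasurableSpace.comap (fun ω => τ ω ≤ s) ⊤
    let πhat : Ω₁ × Ω₂ × Ω₃ → ℝ := fun ω =>
      (∫ ω₂, lam t ω.1 ω₂ * Real.exp (-∫ s in (0:ℝ)..t, lam s ω.1 ω₂) ∂P₂)
        / (∫ ω₂, Real.exp (-∫ s in (0:ℝ)..t, lam s ω.1 ω₂) ∂P₂)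
    ∀ᵐ ω ∂P, t < τ ω →
      (P[fun ω' => lam t ω'.1 ω'.2.1 | 𝓖t]) ω = πhat ω := by
  classical
  intro P 𝓖t πhat
  letI mΩ : MeasurableSpace (Ω₁ × Ω₂ × Ω₃) := Prod.instMeasurableSpace
  haveI : IsProbabilityMeasure P := by unfold P; infer_instance
  -- nonemptiness and basic bounds
  obtain ⟨ω₁0⟩ : Nonempty Ω₁ := by
    by_contra hne
    rw [not_nonempty_iff] at hne
    have h1 := measure_univ (μ := P₁)
    rw [Set.univ_eq_empty_iff.mpr hne, measure_empty] at h1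
    exact zero_ne_one h1
  obtain ⟨ω₂0⟩ : Nonempty Ω₂ := by
    by_contra hne
    rw [not_nonempty_iff] at hne
    have h1 := measure_univ (μ := P₂)
    rw [Set.univ_eq_empty_iff.mpr hne, measure_empty] at h1
    exact zero_ne_one h1
  have hab : a ≤ b := (hlambd 0 ω₁0 ω₂0).1.trans (hlambd 0 ω₁0 ω₂0).2
  have hb : 0 < b := lt_of_lt_of_le ha hab
  have hlabs : ∀ s ω₁ ω₂, |lam s ω₁ ω₂| ≤ b := by
    intro s ω₁ ω₂
    rw [abs_of_pos (lt_of_lt_of_le ha (hlambd s ω₁ ω₂).1)]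
    exact (hlambd s ω₁ ω₂).2
  -- interval integrability and growth bounds
  have hslam : ∀ (ω₁ : Ω₁) (ω₂ : Ω₂), Measurable fun s => lam s ω₁ ω₂ := by
    intro ω₁ ω₂
    exact hlammeas.comp (f := fun s : ℝ => (s, (ω₁, ω₂)))
      (measurable_id.prodMk measurable_const)
  have hIntInt : ∀ (ω₁ : Ω₁) (ω₂ : Ω₂) (u v : ℝ),
      IntervalIntegrable (fun s => lam s ω₁ ω₂) volume u v := by
    intro ω₁ ω₂ u v
    rw [intervalIntegrable_iff]
    haveI : IsFiniteMeasure (volume.restrict (Set.uIoc u v)) := by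
      constructor
      rw [Measure.restrict_apply_univ, Set.uIoc, Real.volume_Ioc]
      exact ENNReal.ofReal_lt_top
    exact intg_of_bdd ((hslam ω₁ ω₂).aestronglyMeasurable)
      (ae_of_all _ fun s => hlabs s ω₁ ω₂)
  have hgrow : ∀ (ω₁ : Ω₁) (ω₂ : Ω₂) {u v : ℝ}, u ≤ v →
      a * (v - u) ≤ (∫ s in u..v, lam s ω₁ ω₂) ∧
        (∫ s in u..v, lam s ω₁ ω₂) ≤ b * (v - u) := by
    intro ω₁ ω₂ u v huv
    constructor
    · have h1 := intervalIntegral.integral_mono_on (μ := volume)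
        (f := fun _ : ℝ => a) (g := fun s => lam s ω₁ ω₂) huv
        intervalIntegrable_const (hIntInt ω₁ ω₂ u v) (fun s _ => (hlambd s ω₁ ω₂).1)
      rwa [intervalIntegral.integral_const, smul_eq_mul, mul_comm] at h1
    · have h1 := intervalIntegral.integral_mono_on (μ := volume)
        (f := fun s => lam s ω₁ ω₂) (g := fun _ : ℝ => b) huv
        (hIntInt ω₁ ω₂ u v) intervalIntegrable_const (fun s _ => (hlambd s ω₁ ω₂).2)
      rwa [intervalIntegral.integral_const, smul_eq_mul, mul_comm] at h1
  have hadd : ∀ (ω₁ : Ω₁) (ω₂ : Ω₂) (u v : ℝ),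
      (∫ s in (0:ℝ)..u, lam s ω₁ ω₂) + ∫ s in u..v, lam s ω₁ ω₂
        = ∫ s in (0:ℝ)..v, lam s ω₁ ω₂ := fun ω₁ ω₂ u v =>
    intervalIntegral.integral_add_adjacent_intervals (hIntInt ω₁ ω₂ 0 u) (hIntInt ω₁ ω₂ u v)
  -- the cumulative intensity and derived objects
  set Lam : Ω₁ → Ω₂ → ℝ := fun ω₁ ω₂ => ∫ s in (0:ℝ)..t, lam s ω₁ ω₂ with hLamDef
  have hLam0 : ∀ ω₁ ω₂, 0 ≤ Lam ω₁ ω₂ := by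
    intro ω₁ ω₂
    have h1 := (hgrow ω₁ ω₂ ht).1
    nlinarith [mul_nonneg ha.le (sub_nonneg.mpr ht)]
  have hLambt : ∀ ω₁ ω₂, Lam ω₁ ω₂ ≤ b * t := by
    intro ω₁ ω₂
    have h1 := (hgrow ω₁ ω₂ ht).2
    rw [sub_zero] at h1
    exact h1
  have hLamIoc : ∀ ω₁ ω₂, Lam ω₁ ω₂ = ∫ s in Set.Ioc (0:ℝ) t, lam s ω₁ ω₂ := fun ω₁ ω₂ =>
    intervalIntegral.integral_of_le ht
  have hLamMeas : Measurable (Function.uncurry Lam) := by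
    have h1 : StronglyMeasurable (fun q : Ω₁ × Ω₂ => ∫ s in Set.Ioc (0:ℝ) t, lam s q.1 q.2) := by
      apply StronglyMeasurable.integral_prod_right
        (f := fun (q : Ω₁ × Ω₂) (s : ℝ) => lam s q.1 q.2)
      exact (hlammeas.comp (measurable_snd.prodMk measurable_fst)).stronglyMeasurable
    have h2 : Function.uncurry Lam
        = fun q : Ω₁ × Ω₂ => ∫ s in Set.Ioc (0:ℝ) t, lam s q.1 q.2 := by
      funext q; exact hLamIoc q.1 q.2
    rw [h2]; exact h1.measurable
  set Eexp : Ω₁ → Ω₂ → ℝ := fun ω₁ ω₂ => Real.exp (-Lam ω₁ ω₂) with hEexpDef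
  have hEexpMeas : Measurable (Function.uncurry Eexp) :=
    Real.measurable_exp.comp hLamMeas.neg
  have hEexp_pos : ∀ ω₁ ω₂, 0 < Eexp ω₁ ω₂ := fun ω₁ ω₂ => Real.exp_pos _
  have hEexp_le_one : ∀ ω₁ ω₂, Eexp ω₁ ω₂ ≤ 1 := by
    intro ω₁ ω₂
    have h1 : Real.exp (-Lam ω₁ ω₂) ≤ Real.exp 0 :=
      Real.exp_le_exp.mpr (neg_nonpos.mpr (hLam0 ω₁ ω₂))
    rwa [Real.exp_zero] at h1
  have hEexp_ge : ∀ ω₁ ω₂, Real.exp (-(b * t)) ≤ Eexp ω₁ ω₂ := fun ω₁ ω₂ =>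
    Real.exp_le_exp.mpr (neg_le_neg (hLambt ω₁ ω₂))
  have hEexp_bd : ∀ ω₁ ω₂, |Eexp ω₁ ω₂| ≤ 1 := fun ω₁ ω₂ => by
    rw [abs_of_pos (hEexp_pos ω₁ ω₂)]; exact hEexp_le_one ω₁ ω₂
  set Nn : Ω₁ → ℝ := fun ω₁ => ∫ ω₂, lam t ω₁ ω₂ * Eexp ω₁ ω₂ ∂P₂ with hNnDef
  set Dd : Ω₁ → ℝ := fun ω₁ => ∫ ω₂, Eexp ω₁ ω₂ ∂P₂ with hDdDef
  have hNEmeas : Measurable (Function.uncurry fun ω₁ ω₂ => lam t ω₁ ω₂ * Eexp ω₁ ω₂) :=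
    (hlammeas.comp (measurable_const.prodMk measurable_id)).mul hEexpMeas
  have hNE_bd : ∀ ω₁ ω₂, |lam t ω₁ ω₂ * Eexp ω₁ ω₂| ≤ b := by
    intro ω₁ ω₂
    rw [abs_mul]
    calc |lam t ω₁ ω₂| * |Eexp ω₁ ω₂| ≤ b * 1 :=
      mul_le_mul (hlabs t ω₁ ω₂) (hEexp_bd ω₁ ω₂) (abs_nonneg _) hb.le
    _ = b := mul_one b
  have hNnMeas : Measurable Nn := by
    have h1 : StronglyMeasurable Nn :=
      StronglyMeasurable.integral_prod_right
        (f := fun ω₁ ω₂ => lam t ω₁ ω₂ * Eexp ω₁ ω₂) hNEmeas.stronglyMeasurable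
    exact h1.measurable
  have hDdMeas : Measurable Dd := by
    have h1 : StronglyMeasurable Dd :=
      StronglyMeasurable.integral_prod_right (f := Eexp) hEexpMeas.stronglyMeasurable
    exact h1.measurable
  have hNbd : ∀ ω₁, |Nn ω₁| ≤ b := by
    intro ω₁
    have h1 := norm_integral_le_of_norm_le_const (μ := P₂)
      (f := fun ω₂ => lam t ω₁ ω₂ * Eexp ω₁ ω₂) (C := b)
      (ae_of_all _ fun ω₂ => by rw [Real.norm_eq_abs]; exact hNE_bd ω₁ ω₂)
    simpa [Real.norm_eq_abs, measure_univ] using h1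
  have hEint : ∀ ω₁, Integrable (fun ω₂ => Eexp ω₁ ω₂) P₂ := fun ω₁ =>
    intg_of_bdd ((hEexpMeas.comp (measurable_const.prodMk measurable_id)).aestronglyMeasurable)
      (ae_of_all _ fun ω₂ => hEexp_bd ω₁ ω₂)
  have hDpos : ∀ ω₁, Real.exp (-(b * t)) ≤ Dd ω₁ := by
    intro ω₁
    have h1 : ∫ _ω₂ : Ω₂, Real.exp (-(b * t)) ∂P₂ ≤ ∫ ω₂, Eexp ω₁ ω₂ ∂P₂ :=
      integral_mono (integrable_const _) (hEint ω₁) (fun ω₂ => hEexp_ge ω₁ ω₂)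
    rwa [integral_const, probReal_univ, one_smul] at h1
  have hDpos' : ∀ ω₁, 0 < Dd ω₁ := fun ω₁ => lt_of_lt_of_le (Real.exp_pos _) (hDpos ω₁)
  have hDne : ∀ ω₁, Dd ω₁ ≠ 0 := fun ω₁ => (hDpos' ω₁).ne'
  set πt : Ω₁ → ℝ := fun ω₁ => Nn ω₁ / Dd ω₁ with hπtDef
  have hπtMeas : Measurable πt := hNnMeas.div hDdMeas
  have hπtbd : ∀ ω₁, |πt ω₁| ≤ b * Real.exp (b * t) := by
    intro ω₁
    rw [hπtDef, abs_div, abs_of_pos (hDpos' ω₁)]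
    calc |Nn ω₁| / Dd ω₁ ≤ b / Real.exp (-(b * t)) :=
      div_le_div₀ hb.le (hNbd ω₁) (Real.exp_pos _) (hDpos ω₁)
    _ = b * Real.exp (b * t) := by rw [Real.exp_neg]; field_simp
  -- the survival set
  set S : Set (Ω₁ × Ω₂ × Ω₃) := {ω | t < τ ω} with hSdef
  have htau_iff : ∀ ω : Ω₁ × Ω₂ × Ω₃, t < τ ω ↔ Lam ω.1 ω.2.1 < Θ ω.2.2 := by
    intro ω
    constructor
    · intro hlt
      by_contra hge
      push_neg at hge
      have hmem : t ∈ {u : ℝ | 0 ≤ u ∧ Θ ω.2.2 ≤ ∫ s in (0:ℝ)..u, lam s ω.1 ω.2.1} := ⟨ht, hge⟩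
      have hbdd : BddBelow {u : ℝ | 0 ≤ u ∧ Θ ω.2.2 ≤ ∫ s in (0:ℝ)..u, lam s ω.1 ω.2.1} :=
        ⟨0, fun u hu => hu.1⟩
      have h1 := csInf_le hbdd hmem
      rw [← hτ ω] at h1
      linarith
    · intro hlt
      have hne : Set.Nonempty
          {u : ℝ | 0 ≤ u ∧ Θ ω.2.2 ≤ ∫ s in (0:ℝ)..u, lam s ω.1 ω.2.1} := by
        refine ⟨max (Θ ω.2.2 / a) t, ⟨le_trans ht (le_max_right _ _), ?_⟩⟩
        have h1 := (hgrow ω.1 ω.2.1 (le_trans ht (le_max_right (Θ ω.2.2 / a) t))).1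
        rw [sub_zero] at h1
        have h2 : Θ ω.2.2 ≤ a * max (Θ ω.2.2 / a) t := by
          have h3 : Θ ω.2.2 / a ≤ max (Θ ω.2.2 / a) t := le_max_left _ _
          have h4 : Θ ω.2.2 = a * (Θ ω.2.2 / a) := by field_simp
          nlinarith
        linarith
      have hlb : ∀ u ∈ {u : ℝ | 0 ≤ u ∧ Θ ω.2.2 ≤ ∫ s in (0:ℝ)..u, lam s ω.1 ω.2.1},
          t + (Θ ω.2.2 - Lam ω.1 ω.2.1) / b ≤ u := by
        intro u hu
        obtain ⟨hu0, huθ⟩ := hu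
        rcases le_or_gt u t with hut | hut
        · exfalso
          have h1 := (hgrow ω.1 ω.2.1 hut).1
          have h2 := hadd ω.1 ω.2.1 u t
          have h3 : Lam ω.1 ω.2.1 = ∫ s in (0:ℝ)..t, lam s ω.1 ω.2.1 := rfl
          nlinarith [mul_nonneg ha.le (sub_nonneg.mpr hut)]
        · have h1 := (hgrow ω.1 ω.2.1 hut.le).2
          have h2 := hadd ω.1 ω.2.1 t u
          have h3 : Lam ω.1 ω.2.1 = ∫ s in (0:ℝ)..t, lam s ω.1 ω.2.1 := rfl
          have h4 : (Θ ω.2.2 - Lam ω.1 ω.2.1) / b ≤ u - t := by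
            rw [div_le_iff₀ hb]
            nlinarith
          linarith
      have h5 : t + (Θ ω.2.2 - Lam ω.1 ω.2.1) / b ≤ τ ω := by
        rw [hτ ω]
        exact le_csInf hne hlb
      have h6 : 0 < (Θ ω.2.2 - Lam ω.1 ω.2.1) / b := div_pos (by linarith) hb
      linarith
  have hS_eq : S = {ω : Ω₁ × Ω₂ × Ω₃ | Lam ω.1 ω.2.1 < Θ ω.2.2} :=
    Set.ext fun ω => htau_iff ω
  -- σ-algebra facts
  have h𝓖le : 𝓖t ≤ (Prod.instMeasurableSpace : MeasurableSpace (Ω₁ × Ω₂ × Ω₃)) := by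
    refine sup_le ?_ ?_
    · exact le_trans (MeasurableSpace.comap_mono (hFle t))
        (measurable_fst : Measurable (@Prod.fst Ω₁ (Ω₂ × Ω₃))).comap_le
    · exact iSup₂_le fun s _ => comap_prop_le _ (hτmeas s)
  haveI : SigmaFinite (P.trim h𝓖le) := by infer_instance
  have hS𝓖 : MeasurableSet[𝓖t] S := by
    have h1 : MeasurableSet[MeasurableSpace.comap
        (fun ω : Ω₁ × Ω₂ × Ω₃ => τ ω ≤ t) ⊤] {ω : Ω₁ × Ω₂ × Ω₃ | τ ω ≤ t} :=
      ⟨{p | p}, MeasurableSpace.measurableSet_top, rfl⟩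
    have h2 : MeasurableSpace.comap (fun ω : Ω₁ × Ω₂ × Ω₃ => τ ω ≤ t) ⊤ ≤ 𝓖t :=
      le_trans (le_iSup₂ (f := fun (s : ℝ) (_ : s ∈ Set.Iic t) =>
        MeasurableSpace.comap (fun ω : Ω₁ × Ω₂ × Ω₃ => τ ω ≤ s) ⊤) t (Set.mem_Iic.mpr le_rfl))
        le_sup_right
    have h3 : MeasurableSet[𝓖t] {ω : Ω₁ × Ω₂ × Ω₃ | τ ω ≤ t} := h2 _ h1
    have h4 : S = {ω : Ω₁ × Ω₂ × Ω₃ | τ ω ≤ t}ᶜ := by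
      ext ω; simp only [hSdef, Set.mem_setOf_eq, Set.mem_compl_iff, not_le]
    rw [h4]; exact h3.compl
  have hSm : MeasurableSet S := h𝓖le S hS𝓖
  -- trace structure of 𝓖t on S
  have htrace : ∀ A : Set (Ω₁ × Ω₂ × Ω₃), MeasurableSet[𝓖t] A →
      ∃ B : Set Ω₁, MeasurableSet[Ftil t] B ∧ A ∩ S = (Prod.fst ⁻¹' B) ∩ S := by
    intro A hA
    let 𝓒 : MeasurableSpace (Ω₁ × Ω₂ × Ω₃) :=
      { MeasurableSet' := fun A => ∃ B : Set Ω₁, MeasurableSet[Ftil t] B ∧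
          A ∩ S = (Prod.fst ⁻¹' B) ∩ S
        measurableSet_empty := ⟨∅, @MeasurableSet.empty _ (Ftil t), by simp⟩
        measurableSet_compl := by
          rintro A' ⟨B, hB, hAB⟩
          refine ⟨Bᶜ, hB.compl, ?_⟩
          have h' := Set.ext_iff.mp hAB
          ext ω
          constructor
          · rintro ⟨hωA, hωS⟩
            exact ⟨fun hωB => hωA ((h' ω).mpr ⟨hωB, hωS⟩).1, hωS⟩
          · rintro ⟨hωB, hωS⟩
            exact ⟨fun hωA => hωB ((h' ω).mp ⟨hωA, hωS⟩).1, hωS⟩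
        measurableSet_iUnion := by
          intro F hF
          choose B hB hFB using hF
          refine ⟨⋃ n, B n, MeasurableSet.iUnion hB, ?_⟩
          rw [Set.iUnion_inter]
          simp_rw [hFB]
          rw [Set.preimage_iUnion, ← Set.iUnion_inter] }
    have hle : 𝓖t ≤ 𝓒 := by
      refine sup_le ?_ ?_
      · rintro A' ⟨B, hB, rfl⟩
        exact ⟨B, hB, rfl⟩
      · refine iSup₂_le fun s hs => ?_
        rintro A' ⟨V, -, rfl⟩
        have hsle : s ≤ t := hs
        by_cases hFa : False ∈ V
        · refine ⟨Set.univ, MeasurableSet.univ, ?_⟩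
          ext ω
          simp only [Set.mem_inter_iff, Set.mem_preimage, Set.mem_univ, true_and]
          constructor
          · rintro ⟨-, hωS⟩; exact hωS
          · intro hωS
            refine ⟨?_, hωS⟩
            have hτω : ¬ (τ ω ≤ s) := by
              have hlt : t < τ ω := hωS
              intro hc; linarith
            show (τ ω ≤ s) ∈ V
            rw [eq_false hτω]
            exact hFa
        · refine ⟨∅, @MeasurableSet.empty _ (Ftil t), ?_⟩
          ext ω
          simp only [Set.mem_inter_iff, Set.mem_preimage, Set.mem_empty_iff_false,
            false_and, iff_false]
          rintro ⟨hωV, hωS⟩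
          have hτω : ¬ (τ ω ≤ s) := by
            have hlt : t < τ ω := hωS
            intro hc; linarith
          rw [show ((τ ω ≤ s) : Prop) = False from eq_false hτω] at hωV
          exact hFa hωV
    exact hle A hA
  -- the integrand and its conditional expectation
  set lamt : Ω₁ × Ω₂ × Ω₃ → ℝ := fun ω' => lam t ω'.1 ω'.2.1 with hlamtDef
  have hlamtMeas : Measurable lamt :=
    hlammeas.comp (measurable_const.prodMk
      (measurable_fst.prodMk (measurable_fst.comp measurable_snd)))
  have hlamt_int : Integrable lamt P :=
    intg_of_bdd hlamtMeas.aestronglyMeasurable (ae_of_all _ fun ω => hlabs t ω.1 ω.2.1)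
  -- the two key Fubini computations
  have key1 : ∀ B : Set Ω₁, MeasurableSet B →
      ∫ ω in (Prod.fst ⁻¹' B) ∩ S, lamt ω ∂P = ∫ ω₁ in B, Nn ω₁ ∂P₁ := by
    intro B hB
    rw [hS_eq]
    exact coxCore P₁ P₂ P₃ Lam hLamMeas hLam0 Θ hΘmeas hΘexp
      (fun ω₁ ω₂ => lam t ω₁ ω₂)
      (hlammeas.comp (measurable_const.prodMk measurable_id)) b
      (fun x y => hlabs t x y) B hB
  have key2 : ∀ B : Set Ω₁, MeasurableSet B →
      ∫ ω in (Prod.fst ⁻¹' B) ∩ S, πt ω.1 ∂P = ∫ ω₁ in B, Nn ω₁ ∂P₁ := by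
    intro B hB
    have h1 := coxCore P₁ P₂ P₃ Lam hLamMeas hLam0 Θ hΘmeas hΘexp
      (fun ω₁ _ => πt ω₁) (hπtMeas.comp measurable_fst) (b * Real.exp (b * t))
      (fun x _ => hπtbd x) B hB
    rw [hS_eq]
    refine h1.trans ?_
    refine setIntegral_congr_fun hB (fun ω₁ _ => ?_)
    rw [integral_const_mul]
    show πt ω₁ * Dd ω₁ = Nn ω₁
    rw [hπtDef]
    exact div_mul_cancel₀ (Nn ω₁) (hDne ω₁)
  -- candidate function
  set cnd : (Ω₁ × Ω₂ × Ω₃) → ℝ := P[lamt|𝓖t] with hcndDef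
  set g : (Ω₁ × Ω₂ × Ω₃) → ℝ := S.piecewise (fun ω => πt ω.1) cnd with hgdef
  have hπfst_meas : Measurable fun ω : Ω₁ × Ω₂ × Ω₃ => πt ω.1 :=
    hπtMeas.comp measurable_fst
  have hπfst_int : Integrable (fun ω : Ω₁ × Ω₂ × Ω₃ => πt ω.1) P :=
    intg_of_bdd hπfst_meas.aestronglyMeasurable (ae_of_all _ fun ω => hπtbd ω.1)
  have hcnd_int : Integrable cnd P := integrable_condExp
  have hg_int : Integrable g P := by
    have h1 : g = S.indicator (fun ω => πt ω.1) + Sᶜ.indicator cnd := by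
      funext ω
      by_cases hω : ω ∈ S <;>
        simp [hgdef, Set.piecewise, Set.indicator, hω]
    rw [h1]
    exact (hπfst_int.indicator hSm).add (hcnd_int.indicator hSm.compl)
  have hg_eq : ∀ A : Set (Ω₁ × Ω₂ × Ω₃), MeasurableSet[𝓖t] A → P A < ⊤ →
      ∫ ω in A, g ω ∂P = ∫ ω in A, lamt ω ∂P := by
    intro A hA _
    have hAm : MeasurableSet A := h𝓖le A hA
    have split_g := integral_inter_add_diff (μ := P) (f := g) (s := A) (t := S)
      hSm hg_int.integrableOn
    have split_l := integral_inter_add_diff (μ := P) (f := lamt) (s := A) (t := S)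
      hSm hlamt_int.integrableOn
    obtain ⟨B, hB, hABS⟩ := htrace A hA
    have e1 : ∫ ω in A ∩ S, g ω ∂P = ∫ ω in A ∩ S, πt ω.1 ∂P :=
      setIntegral_congr_fun (hAm.inter hSm)
        (fun ω hω => Set.piecewise_eq_of_mem _ _ _ hω.2)
    have e2 : ∫ ω in A ∩ S, πt ω.1 ∂P = ∫ ω in A ∩ S, lamt ω ∂P := by
      rw [hABS, key2 B (hFle t B hB), ← key1 B (hFle t B hB)]
    have e3 : ∫ ω in A \ S, g ω ∂P = ∫ ω in A \ S, cnd ω ∂P :=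
      setIntegral_congr_fun (hAm.diff hSm)
        (fun ω hω => Set.piecewise_eq_of_notMem _ _ _ hω.2)
    have e4 : ∫ ω in A \ S, cnd ω ∂P = ∫ ω in A \ S, lamt ω ∂P := by
      have hdiff𝓖 : MeasurableSet[𝓖t] (A \ S) := hA.diff hS𝓖
      exact setIntegral_condExp h𝓖le hlamt_int hdiff𝓖
    linarith
  -- a.e.-measurability of the candidate
  haveI : IsFiniteMeasure (volume.restrict (Set.Ioc (0:ℝ) t)) := by
    constructor
    rw [Measure.restrict_apply_univ, Real.volume_Ioc]
    exact ENNReal.ofReal_lt_top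
  have hLamSlice : ∀ ω₂, AEStronglyMeasurable[Ftil t] (fun ω₁ => Lam ω₁ ω₂) P₁ := by
    intro ω₂
    have happ := lemA P₁ (volume.restrict (Set.Ioc (0:ℝ) t))
      (fun ω₁ s => lam (min s t) ω₁ ω₂)
      (hlammeas.comp ((measurable_snd.min measurable_const).prodMk
        (measurable_fst.prodMk measurable_const)))
      b (fun x s => hlabs _ _ _) (Ftil t) (hFle t)
      (fun s => by
        have hsm : StronglyMeasurable[Ftil t] (fun ω₁ => lam (min s t) ω₁ ω₂) :=
          (hadapt (min s t) (min_le_right _ _) ω₂).stronglyMeasurable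
        exact hsm.aestronglyMeasurable)
    refine happ.congr (ae_of_all _ fun ω₁ => ?_)
    show (∫ s, lam (min s t) ω₁ ω₂ ∂(volume.restrict (Set.Ioc (0:ℝ) t))) = Lam ω₁ ω₂
    rw [hLamIoc ω₁ ω₂]
    exact setIntegral_congr_fun measurableSet_Ioc (fun s hs => by rw [min_eq_left hs.2])
  have hESlice : ∀ ω₂, AEStronglyMeasurable[Ftil t] (fun ω₁ => Eexp ω₁ ω₂) P₁ := by
    intro ω₂
    obtain ⟨h0, h0meas, h0ae⟩ := hLamSlice ω₂
    refine ⟨fun ω₁ => Real.exp (-h0 ω₁),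
      Real.continuous_exp.comp_stronglyMeasurable h0meas.neg, ?_⟩
    filter_upwards [h0ae] with ω₁ hω₁
    show Real.exp (-Lam ω₁ ω₂) = Real.exp (-h0 ω₁)
    rw [hω₁]
  have hNAE : AEStronglyMeasurable[Ftil t] Nn P₁ := by
    have happ := lemA P₁ P₂ (fun ω₁ ω₂ => lam t ω₁ ω₂ * Eexp ω₁ ω₂) hNEmeas
      b hNE_bd (Ftil t) (hFle t) ?_
    · exact happ
    · intro ω₂
      obtain ⟨e', he'm, he'ae⟩ := hESlice ω₂
      have hsm : StronglyMeasurable[Ftil t] (fun ω₁ => lam t ω₁ ω₂) :=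
        (hadapt t le_rfl ω₂).stronglyMeasurable
      refine ⟨fun ω₁ => lam t ω₁ ω₂ * e' ω₁, hsm.mul he'm, ?_⟩
      filter_upwards [he'ae] with ω₁ hω₁
      show lam t ω₁ ω₂ * Eexp ω₁ ω₂ = lam t ω₁ ω₂ * e' ω₁
      rw [hω₁]
  have hDAE : AEStronglyMeasurable[Ftil t] Dd P₁ := by
    have happ := lemA P₁ P₂ Eexp hEexpMeas 1 hEexp_bd (Ftil t) (hFle t) hESlice
    exact happ
  have hπAE : AEStronglyMeasurable[Ftil t] πt P₁ := by
    obtain ⟨n', hn'm, hn'ae⟩ := hNAE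
    obtain ⟨d', hd'm, hd'ae⟩ := hDAE
    refine ⟨fun ω₁ => n' ω₁ / d' ω₁,
      ((hn'm.measurable.div hd'm.measurable).stronglyMeasurable), ?_⟩
    filter_upwards [hn'ae, hd'ae] with ω₁ h1 h2
    show Nn ω₁ / Dd ω₁ = n' ω₁ / d' ω₁
    rw [h1, h2]
  obtain ⟨πt', hπt'_meas, hπt'_ae⟩ := hπAE
  have hfst : @Measurable _ _ 𝓖t (Ftil t) Prod.fst := Measurable.of_comap_le le_sup_left
  have hgm : AEStronglyMeasurable[𝓖t] g P := by
    refine ⟨S.piecewise (fun ω => πt' ω.1) cnd, ?_, ?_⟩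
    · refine StronglyMeasurable.piecewise hS𝓖 ?_ stronglyMeasurable_condExp
      exact (hπt'_meas.measurable.comp hfst).stronglyMeasurable
    · have hnull : ∀ᵐ ω ∂P, πt ω.1 = πt' ω.1 := by
        have h0 : P₁ {x | ¬ πt x = πt' x} = 0 := ae_iff.mp hπt'_ae
        obtain ⟨N, hNsub, hNmeas, hN0⟩ := exists_measurable_superset_of_null h0
        rw [ae_iff]
        refine measure_mono_null (t := Prod.fst ⁻¹' N)
          (fun ω hω => hNsub (show ω.1 ∈ {x | ¬ πt x = πt' x} from hω)) ?_
        have hpre : (Prod.fst ⁻¹' N : Set (Ω₁ × Ω₂ × Ω₃)) = N ×ˢ Set.univ :=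
          Set.prod_univ.symm
        show P (Prod.fst ⁻¹' N) = 0
        rw [hpre]
        show (P₁.prod (P₂.prod P₃)) (N ×ˢ Set.univ) = 0
        rw [Measure.prod_prod, hN0, zero_mul]
      filter_upwards [hnull] with ω hω
      by_cases hmem : ω ∈ S
      · rw [hgdef, Set.piecewise_eq_of_mem _ _ _ hmem, Set.piecewise_eq_of_mem _ _ _ hmem]
        exact hω
      · rw [hgdef, Set.piecewise_eq_of_notMem _ _ _ hmem,
          Set.piecewise_eq_of_notMem _ _ _ hmem]
  -- conclusion
  have hfinal : g =ᵐ[P] cnd :=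
    ae_eq_condExp_of_forall_setIntegral_eq h𝓖le hlamt_int
      (fun A _ _ => hg_int.integrableOn) hg_eq hgm
  filter_upwards [hfinal] with ω hgω
  intro hlt
  have hmem : ω ∈ S := hlt
  rw [← hgω, hgdef, Set.piecewise_eq_of_mem _ _ _ hmem]
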